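/- Let G be a tournament with t vertices. Then there exists a linear ordering π of the vertices of G such that the spanning subgraph R_π(G), consisting of exactly those edges (i,j) of G for which i appears before j in the ordering π, contains no transitive subtournament on ⌊√(2t)⌋ + 1 vertices. -/

import Mathlib

/-- `E` is (the edge relation of) a tournament: it is irreflexive, and for each pair of
distinct vertices exactly one of the two directed edges is present. -/
def IsTournament {V : Type*} (E : V → V → Prop) : Prop :=
  (∀ v, ¬ E v v) ∧ (∀ u v : V, u ≠ v → (E u v ↔ ¬ E v u))

/-- A directed-edge relation is acyclic if there is no directed cycle. -/
def IsAcyclicRel {V : Type*} (E : V → V → Prop) : Prop :=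
  ∀ v, ¬ Relation.TransGen E v v

private lemma key_lemma {V : Type} [Fintype V] (E : V → V → Prop) (hT : IsTournament E) :
    ∀ (s : ℕ) (U : Finset V), 2 * U.card < (s + 1) * (s + 2) →
      ∃ g : V → ℕ, Set.InjOn g ↑U ∧
        ∀ S : Finset V, S ⊆ U →
          (∀ u ∈ S, ∀ v ∈ S, u ≠ v → (E u v ∧ g u < g v) ∨ (E v u ∧ g v < g u)) →
          S.card ≤ s := by
  classical
  intro s
  induction s with
  | zero =>
      intro U hU
      have hU0 : U.card = 0 := by omega
      refine ⟨fun _ => 0, ?_, ?_⟩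
      · rw [Finset.card_eq_zero.mp hU0]
        simp
      · intro S hSU _
        have : S.card ≤ U.card := Finset.card_le_card hSU
        omega
  | succ s ih =>
      intro U hU
      by_cases hmax : ∀ W : Finset V, W ⊆ U →
          (∃ f : V → ℕ, ∀ u ∈ W, ∀ v ∈ W, u ≠ v → (E u v ↔ f u < f v)) → W.card ≤ s + 1
      · -- every transitive subset of U has size ≤ s+1 : any injective g works
        refine ⟨fun v => ((Fintype.equivFin V) v : ℕ), ?_, ?_⟩
        · intro a _ b _ hab
          exact (Fintype.equivFin V).injective (Fin.val_injective hab)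
        · intro S hSU hS
          refine hmax S hSU ⟨fun v => ((Fintype.equivFin V) v : ℕ), ?_⟩
          intro u hu v hv huv
          constructor
          · intro h
            rcases hS u hu v hv huv with ⟨_, h2⟩ | ⟨h1, _⟩
            · exact h2
            · exact absurd h ((hT.2 v u (Ne.symm huv)).mp h1)
          · intro hlt
            rcases hS u hu v hv huv with ⟨h1, _⟩ | ⟨_, h2⟩
            · exact h1
            · omega
      · push_neg at hmax
        obtain ⟨W0, hW0U, hW0t, hW0c⟩ := hmax
        obtain ⟨f, hf0⟩ := hW0t
        obtain ⟨W, hWW0, hWcard⟩ :=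
          Finset.exists_subset_card_eq (show s + 2 ≤ W0.card by omega)
        have hWU : W ⊆ U := hWW0.trans hW0U
        have hf : ∀ u ∈ W, ∀ v ∈ W, u ≠ v → (E u v ↔ f u < f v) :=
          fun u hu v hv => hf0 u (hWW0 hu) v (hWW0 hv)
        set U' := U \ W with hU'def
        have hcard' : 2 * U'.card < (s + 1) * (s + 2) := by
          have h1 : U'.card = U.card - W.card := Finset.card_sdiff_of_subset hWU
          have h2 : W.card ≤ U.card := Finset.card_le_card hWU
          have h3 : (s + 1 + 1) * (s + 1 + 2) = (s + 1) * (s + 2) + 2 * (s + 2) := by ring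
          omega
        obtain ⟨g', hg'inj, hg'⟩ := ih U' hcard'
        set M := W.sup f with hM
        have hfM : ∀ v ∈ W, f v ≤ M := fun v hv => Finset.le_sup hv
        set g : V → ℕ := fun v => if v ∈ W then M - f v else M + 1 + g' v with hg
        have hgW : ∀ v ∈ W, g v = M - f v := by
          intro v hv; simp only [hg, if_pos hv]
        have hgU' : ∀ v ∈ U', g v = M + 1 + g' v := by
          intro v hv
          have : v ∉ W := (Finset.mem_sdiff.mp hv).2
          simp only [hg, if_neg this]
        -- distinct elements of W have distinct f values
        have hfinj : ∀ a ∈ W, ∀ b ∈ W, a ≠ b → f a ≠ f b := by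
          intro a ha b hb hab
          have h1 := hf a ha b hb hab
          have h2 := hf b hb a ha (Ne.symm hab)
          have h3 : E a b ∨ E b a := by
            by_cases h : E a b
            · exact Or.inl h
            · exact Or.inr (by
                have := (hT.2 a b hab)
                tauto)
          rcases h3 with h | h
          · have := h1.mp h; omega
          · have := h2.mp h; omega
        refine ⟨g, ?_, ?_⟩
        · -- injectivity on U
          intro a ha b hb hab
          simp only [Finset.mem_coe] at ha hb
          by_cases haW : a ∈ W <;> by_cases hbW : b ∈ W
          · by_contra hne
            have h1 := hfinj a haW b hbW hne
            have h2 := hfM a haW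
            have h3 := hfM b hbW
            rw [hgW a haW, hgW b hbW] at hab
            omega
          · exfalso
            have hbU' : b ∈ U' := Finset.mem_sdiff.mpr ⟨hb, hbW⟩
            rw [hgW a haW, hgU' b hbU'] at hab
            have := hfM a haW
            omega
          · exfalso
            have haU' : a ∈ U' := Finset.mem_sdiff.mpr ⟨ha, haW⟩
            rw [hgU' a haU', hgW b hbW] at hab
            have := hfM b hbW
            omega
          · have haU' : a ∈ U' := Finset.mem_sdiff.mpr ⟨ha, haW⟩
            have hbU' : b ∈ U' := Finset.mem_sdiff.mpr ⟨hb, hbW⟩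
            rw [hgU' a haU', hgU' b hbU'] at hab
            exact hg'inj (Finset.mem_coe.mpr haU') (Finset.mem_coe.mpr hbU') (by omega)
        · -- clique bound
          intro S hSU hS
          have hsub : S ⊆ (S ∩ W) ∪ (S ∩ U') := by
            intro x hx
            have hxU : x ∈ U := hSU hx
            by_cases hxW : x ∈ W
            · exact Finset.mem_union_left _ (Finset.mem_inter.mpr ⟨hx, hxW⟩)
            · exact Finset.mem_union_right _
                (Finset.mem_inter.mpr ⟨hx, Finset.mem_sdiff.mpr ⟨hxU, hxW⟩⟩)
          have hsplit : S.card ≤ (S ∩ W).card + (S ∩ U').card :=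
            le_trans (Finset.card_le_card hsub) (Finset.card_union_le _ _)
          have h1 : (S ∩ W).card ≤ 1 := by
            rw [Finset.card_le_one]
            intro a ha b hb
            by_contra hne
            have haS := (Finset.mem_inter.mp ha).1
            have haW := (Finset.mem_inter.mp ha).2
            have hbS := (Finset.mem_inter.mp hb).1
            have hbW := (Finset.mem_inter.mp hb).2
            have h2 := hfM a haW
            have h3 := hfM b hbW
            rcases hS a haS b hbS hne with ⟨hE, hlt⟩ | ⟨hE, hlt⟩
            · have := (hf a haW b hbW hne).mp hE
              rw [hgW a haW, hgW b hbW] at hlt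
              omega
            · have := (hf b hbW a haW (Ne.symm hne)).mp hE
              rw [hgW a haW, hgW b hbW] at hlt
              omega
          have h2 : (S ∩ U').card ≤ s := by
            refine hg' (S ∩ U') Finset.inter_subset_right ?_
            intro u hu v hv huv
            have huS := (Finset.mem_inter.mp hu).1
            have huU' := (Finset.mem_inter.mp hu).2
            have hvS := (Finset.mem_inter.mp hv).1
            have hvU' := (Finset.mem_inter.mp hv).2
            rcases hS u huS v hvS huv with ⟨hE, hlt⟩ | ⟨hE, hlt⟩
            · left
              refine ⟨hE, ?_⟩
              rw [hgU' u huU', hgU' v hvU'] at hlt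
              omega
            · right
              refine ⟨hE, ?_⟩
              rw [hgU' u huU', hgU' v hvU'] at hlt
              omega
          omega

/-- For every tournament `G` on `t` vertices there is a linear ordering `π` of the
vertices (an equivalence with `Fin t`) such that `R_π(G)`, the spanning subgraph
consisting of the edges of `G` going forward in `π`, contains no transitive
subtournament on `⌊√(2t)⌋ + 1` vertices, i.e. no set `S` of that many vertices such
that every pair of distinct vertices of `S` is joined by an edge of `R_π(G)` and the
edges of `R_π(G)` inside `S` form no directed cycle. -/
theorem stmt1 (V : Type) [Fintype V] (E : V → V → Prop) (hT : IsTournament E) :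
    ∃ π : V ≃ Fin (Fintype.card V),
      ¬ ∃ S : Finset V,
        S.card = Nat.sqrt (2 * Fintype.card V) + 1 ∧
        (∀ u ∈ S, ∀ v ∈ S, u ≠ v →
          (E u v ∧ π u < π v) ∨ (E v u ∧ π v < π u)) ∧
        IsAcyclicRel (fun u v => u ∈ S ∧ v ∈ S ∧ E u v ∧ π u < π v) := by
  classical
  set s := Nat.sqrt (2 * Fintype.card V) with hs
  have hlt : 2 * (Finset.univ : Finset V).card < (s + 1) * (s + 2) := by
    have h1 : 2 * Fintype.card V < (s + 1) * (s + 1) := Nat.lt_succ_sqrt (2 * Fintype.card V)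
    have h2 : (s + 1) * (s + 1) ≤ (s + 1) * (s + 2) := Nat.mul_le_mul_left _ (by omega)
    have h3 : (Finset.univ : Finset V).card = Fintype.card V := Finset.card_univ
    omega
  obtain ⟨g, hginjOn, hgcl⟩ := key_lemma E hT s Finset.univ hlt
  have hginj : Function.Injective g := by
    have h := hginjOn
    rw [Finset.coe_univ] at h
    exact Set.injOn_univ.mp h
  letI lo : LinearOrder V := LinearOrder.lift' g hginj
  have hltiff : ∀ u v : V, u < v ↔ g u < g v := by
    intro u v
    constructor
    · intro h
      rcases lt_or_ge (g u) (g v) with h' | h'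
      · exact h'
      · exfalso
        have : v ≤ u := h'
        exact absurd (le_of_lt h) (not_le.mpr (lt_of_le_of_ne this (fun he => (ne_of_lt h) he.symm)))
    · intro h
      have h1 : u ≤ v := le_of_lt h
      have h2 : ¬ v ≤ u := not_le.mpr h
      exact lt_of_le_not_ge h1 h2
  let π : V ≃o Fin (Fintype.card V) := (monoEquivOfFin V rfl).symm
  refine ⟨π.toEquiv, ?_⟩
  rintro ⟨S, hcard, hpair, -⟩
  have hS : S.card ≤ s := by
    refine hgcl S (Finset.subset_univ S) ?_
    intro u hu v hv huv
    rcases hpair u hu v hv huv with ⟨hE, hltp⟩ | ⟨hE, hltp⟩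
    · left
      exact ⟨hE, (hltiff u v).mp (π.lt_iff_lt.mp hltp)⟩
    · right
      exact ⟨hE, (hltiff v u).mp (π.lt_iff_lt.mp hltp)⟩
  omega
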